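/- Let {R̄^(k)}_{k≥1} be a nonnegative sequence satisfying the equality R̄^(k+1) = p R̄^(k) + Σ_{j=1}^J q_j max_{k' ∈ [max(1, k-M+1), k]} (R̄^(k'))^{η_j} for all k ≥ 1, where 0 < p < 1, q_j ≥ 0, η_j > 1, J, M finite, and suppose p + Σ_{j=1}^J q_j (R̄^(1))^{η_j - 1} ≤ δ for some δ ∈ [p, 1) and R̄^(1) > 0. Then lim_{k→∞} R̄^(k+1)/R̄^(k) = p. -/

import Mathlib

open Filter

/-- Maximum of `g` over the integer index range `[a, b]`. -/
noncomputable def seqMax (g : ℕ → ℝ) (a b : ℕ) : ℝ := sSup (g '' Set.Icc a b)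

lemma le_seqMax (g : ℕ → ℝ) {a b x : ℕ} (hx : x ∈ Set.Icc a b) :
    g x ≤ seqMax g a b :=
  le_csSup ((Set.finite_Icc a b).image g).bddAbove ⟨x, hx, rfl⟩

lemma seqMax_le (g : ℕ → ℝ) {a b : ℕ} (hab : a ≤ b) {c : ℝ}
    (h : ∀ x ∈ Set.Icc a b, g x ≤ c) : seqMax g a b ≤ c :=
  csSup_le ((Set.nonempty_Icc.2 hab).image g) (by rintro _ ⟨x, hx, rfl⟩; exact h x hx)

lemma stmt5_div (m M : ℕ) (hM : 1 ≤ M) : m / M ≤ (m - M) / M + 1 := by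
  rcases le_total m M with h | h
  · have h1 : m / M ≤ M / M := Nat.div_le_div_right h
    rw [Nat.div_self (by omega)] at h1
    exact h1.trans (Nat.le_add_left 1 _)
  · exact le_of_eq (calc m / M = (m - M + M) / M := by congr 1; omega
      _ = (m - M) / M + 1 := Nat.add_div_right _ (by omega))

/-- Asymptotic linear rate of the tight nonlinear system (Proposition 5(b)). -/
theorem stmt_5 (R : ℕ → ℝ) (p δ : ℝ) (J M : ℕ) (q η : ℕ → ℝ)
    (hR : ∀ k, 1 ≤ k → 0 ≤ R k) (hR1 : 0 < R 1)
    (hp : 0 < p) (hp1 : p < 1)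
    (hq : ∀ j, j < J → 0 ≤ q j) (hη : ∀ j, j < J → 1 < η j)
    (hJ : 1 ≤ J) (hM : 1 ≤ M)
    (hrec : ∀ k, 1 ≤ k →
      R (k + 1) = p * R k + ∑ j ∈ Finset.range J,
        q j * seqMax (fun k' => R k' ^ η j) (max 1 (k - M + 1)) k)
    (hδ1 : p ≤ δ) (hδ2 : δ < 1)
    (hcond : p + ∑ j ∈ Finset.range J, q j * R 1 ^ (η j - 1) ≤ δ) :
    Tendsto (fun k => R (k + 1) / R k) atTop (nhds p) := by
  have hM0 : 0 < M := hM
  have hδ0 : 0 < δ := lt_of_lt_of_le hp hδ1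
  have hwin : ∀ k : ℕ, 1 ≤ k → max 1 (k - M + 1) ≤ k := by intro k hk; omega
  -- nonnegativity of the nonlinear sum
  have hSnn : ∀ k, 1 ≤ k → ∀ j ∈ Finset.range J,
      0 ≤ q j * seqMax (fun k' => R k' ^ η j) (max 1 (k - M + 1)) k := by
    intro k hk j hj
    refine mul_nonneg (hq j (Finset.mem_range.1 hj)) ?_
    have h1 : (fun k' => R k' ^ η j) k ≤ seqMax (fun k' => R k' ^ η j) (max 1 (k - M + 1)) k :=
      le_seqMax (fun k' => R k' ^ η j) (Set.mem_Icc.2 ⟨hwin k hk, le_rfl⟩)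
    exact le_trans (Real.rpow_nonneg (hR k hk) _) h1
  -- positivity
  have hpos : ∀ k, 1 ≤ k → 0 < R k := by
    intro k hk
    induction k, hk using Nat.le_induction with
    | base => exact hR1
    | succ n hn ih =>
      rw [hrec n hn]
      have h2 : (0:ℝ) ≤ ∑ j ∈ Finset.range J,
          q j * seqMax (fun k' => R k' ^ η j) (max 1 (n - M + 1)) n :=
        Finset.sum_nonneg (hSnn n hn)
      nlinarith
  -- lower bound iteration
  have hstep : ∀ k, 1 ≤ k → p * R k ≤ R (k + 1) := by
    intro k hk; rw [hrec k hk]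
    have h2 : (0:ℝ) ≤ ∑ j ∈ Finset.range J,
        q j * seqMax (fun k' => R k' ^ η j) (max 1 (k - M + 1)) k :=
      Finset.sum_nonneg (hSnn k hk)
    linarith
  have hlow : ∀ d k', 1 ≤ k' → p ^ d * R k' ≤ R (k' + d) := by
    intro d
    induction d with
    | zero => intro k' hk'; simp
    | succ n ih =>
      intro k' hk'
      have h1 := ih k' hk'
      have h2 := hstep (k' + n) (by omega)
      calc p ^ (n + 1) * R k' = p * (p ^ n * R k') := by ring
        _ ≤ p * R (k' + n) := mul_le_mul_of_nonneg_left h1 hp.le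
        _ ≤ R (k' + n + 1) := h2
  -- linear convergence upper bound
  have hub : ∀ k, 1 ≤ k → R k ≤ δ ^ ((k - 1) / M) * R 1 := by
    intro k
    induction k using Nat.strong_induction_on with
    | _ k ih =>
      intro hk
      rcases Nat.eq_or_lt_of_le hk with h1 | h1
      · rw [← h1]; simp
      · obtain ⟨m, rfl⟩ : ∃ m, k = m + 1 := ⟨k - 1, by omega⟩
        have hm : 1 ≤ m := by omega
        set w := max 1 (m - M + 1) with hwdef
        have hw1 : w ≤ m := hwin m hm
        have hAmem : R m ≤ seqMax R w m := le_seqMax R (Set.mem_Icc.2 ⟨hw1, le_rfl⟩)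
        have hA0 : 0 ≤ seqMax R w m := le_trans (hR m hm) hAmem
        have hAub : seqMax R w m ≤ δ ^ ((m - M) / M) * R 1 := by
          apply seqMax_le R hw1
          intro x hx
          obtain ⟨hx1, hx2⟩ := Set.mem_Icc.1 hx
          have hx0 : 1 ≤ x := le_trans (le_max_left 1 _) hx1
          have h3 : R x ≤ δ ^ ((x - 1) / M) * R 1 := ih x (by omega) hx0
          have h4 : δ ^ ((x - 1) / M) ≤ δ ^ ((m - M) / M) := by
            apply pow_le_pow_of_le_one hδ0.le hδ2.le
            apply Nat.div_le_div_right
            omega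
          nlinarith
        have hterm : ∀ j ∈ Finset.range J,
            q j * seqMax (fun k' => R k' ^ η j) w m
              ≤ q j * R 1 ^ (η j - 1) * seqMax R w m := by
          intro j hj
          have hjJ := Finset.mem_range.1 hj
          have h1 : seqMax (fun k' => R k' ^ η j) w m
              ≤ R 1 ^ (η j - 1) * seqMax R w m := by
            apply seqMax_le _ hw1
            intro x hx
            obtain ⟨hx1, hx2⟩ := Set.mem_Icc.1 hx
            have hx0 : 1 ≤ x := le_trans (le_max_left 1 _) hx1
            have hRxpos := hpos x hx0
            have hRx1 : R x ≤ R 1 := by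
              have h3 := ih x (by omega) hx0
              have h4 : δ ^ ((x - 1) / M) ≤ 1 := pow_le_one₀ hδ0.le hδ2.le
              nlinarith
            have heq := Real.rpow_add_one (ne_of_gt hRxpos) (η j - 1)
            rw [sub_add_cancel] at heq
            have h6 : R x ^ (η j - 1) ≤ R 1 ^ (η j - 1) :=
              Real.rpow_le_rpow hRxpos.le hRx1 (by linarith [hη j hjJ])
            have h7 : R x ≤ seqMax R w m := le_seqMax R hx
            calc R x ^ η j = R x ^ (η j - 1) * R x := heq
              _ ≤ R 1 ^ (η j - 1) * seqMax R w m :=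
                mul_le_mul h6 h7 hRxpos.le (Real.rpow_nonneg hR1.le _)
          calc q j * seqMax (fun k' => R k' ^ η j) w m
              ≤ q j * (R 1 ^ (η j - 1) * seqMax R w m) :=
                mul_le_mul_of_nonneg_left h1 (hq j hjJ)
            _ = q j * R 1 ^ (η j - 1) * seqMax R w m := by ring
        have hsum : (∑ j ∈ Finset.range J, q j * seqMax (fun k' => R k' ^ η j) w m)
            ≤ (∑ j ∈ Finset.range J, q j * R 1 ^ (η j - 1)) * seqMax R w m := by
          rw [Finset.sum_mul]
          exact Finset.sum_le_sum hterm
        have hsumδ : (∑ j ∈ Finset.range J, q j * R 1 ^ (η j - 1)) ≤ δ - p := by linarith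
        have hRm1 : R (m + 1) ≤ δ * seqMax R w m := by
          rw [hrec m hm]
          have h8 := mul_le_mul_of_nonneg_right hsumδ hA0
          have h9 := mul_le_mul_of_nonneg_left hAmem hp.le
          linarith
        calc R (m + 1) ≤ δ * seqMax R w m := hRm1
          _ ≤ δ * (δ ^ ((m - M) / M) * R 1) := mul_le_mul_of_nonneg_left hAub hδ0.le
          _ = δ ^ ((m - M) / M + 1) * R 1 := by ring
          _ ≤ δ ^ ((m + 1 - 1) / M) * R 1 := by
              apply mul_le_mul_of_nonneg_right _ hR1.le
              apply pow_le_pow_of_le_one hδ0.le hδ2.le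
              simpa using stmt5_div m M hM
  -- the bound sequence tends to zero
  have hpM : 0 < p ^ (M - 1) := pow_pos hp _
  have hg : Tendsto (fun k : ℕ => δ ^ ((k - M) / M) * R 1) atTop (nhds 0) := by
    have h2 : Tendsto (fun k : ℕ => (k - M) / M) atTop atTop :=
      tendsto_atTop_atTop.2 fun b =>
        ⟨b * M + M, fun k hk => (Nat.le_div_iff_mul_le hM0).2 (by omega)⟩
    simpa using ((tendsto_pow_atTop_nhds_zero_of_lt_one hδ0.le hδ2).comp h2).mul_const (R 1)
  have hE : Tendsto (fun k : ℕ => ∑ j ∈ Finset.range J,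
      q j * (δ ^ ((k - M) / M) * R 1) ^ (η j - 1) / p ^ (M - 1)) atTop (nhds 0) := by
    have hterm : ∀ j ∈ Finset.range J, Tendsto (fun k : ℕ =>
        q j * (δ ^ ((k - M) / M) * R 1) ^ (η j - 1) / p ^ (M - 1)) atTop (nhds 0) := by
      intro j hj
      have hjJ := Finset.mem_range.1 hj
      have h1 : Tendsto (fun k : ℕ => (δ ^ ((k - M) / M) * R 1) ^ (η j - 1))
          atTop (nhds 0) := by
        have h2 := hg.rpow_const (p := η j - 1) (Or.inr (by linarith [hη j hjJ]))
        rwa [Real.zero_rpow (by intro h; linarith [hη j hjJ, h] : η j - 1 ≠ 0)] at h2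
      simpa using (h1.const_mul (q j)).div_const (p ^ (M - 1))
    have h0 := tendsto_finset_sum (Finset.range J) hterm
    simpa using h0
  -- bound on the ratio error term
  have hDle : ∀ k, 1 ≤ k →
      (∑ j ∈ Finset.range J, q j * seqMax (fun k' => R k' ^ η j) (max 1 (k - M + 1)) k)
      ≤ (∑ j ∈ Finset.range J,
          q j * (δ ^ ((k - M) / M) * R 1) ^ (η j - 1) / p ^ (M - 1)) * R k := by
    intro k hk
    rw [Finset.sum_mul]
    apply Finset.sum_le_sum
    intro j hj
    have hjJ := Finset.mem_range.1 hj
    have hw1 : max 1 (k - M + 1) ≤ k := hwin k hk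
    have h1 : seqMax (fun k' => R k' ^ η j) (max 1 (k - M + 1)) k
        ≤ (δ ^ ((k - M) / M) * R 1) ^ (η j - 1) * (R k / p ^ (M - 1)) := by
      apply seqMax_le _ hw1
      intro x hx
      obtain ⟨hx1, hx2⟩ := Set.mem_Icc.1 hx
      have hx0 : 1 ≤ x := le_trans (le_max_left 1 _) hx1
      have hRxpos := hpos x hx0
      have h2 : R x ≤ δ ^ ((k - M) / M) * R 1 := by
        have h3 := hub x hx0
        have h4 : δ ^ ((x - 1) / M) ≤ δ ^ ((k - M) / M) :=
          pow_le_pow_of_le_one hδ0.le hδ2.le (Nat.div_le_div_right (by omega))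
        nlinarith
      have h5 : R x ^ (η j - 1) ≤ (δ ^ ((k - M) / M) * R 1) ^ (η j - 1) :=
        Real.rpow_le_rpow hRxpos.le h2 (by linarith [hη j hjJ])
      have h6 : R x ≤ R k / p ^ (M - 1) := by
        rw [le_div_iff₀ hpM]
        have h7 := hlow (k - x) x hx0
        rw [show x + (k - x) = k by omega] at h7
        have h8 : p ^ (M - 1) ≤ p ^ (k - x) :=
          pow_le_pow_of_le_one hp.le hp1.le (by omega)
        calc R x * p ^ (M - 1) ≤ R x * p ^ (k - x) :=
              mul_le_mul_of_nonneg_left h8 hRxpos.le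
          _ = p ^ (k - x) * R x := by ring
          _ ≤ R k := h7
      have heq := Real.rpow_add_one (ne_of_gt hRxpos) (η j - 1)
      rw [sub_add_cancel] at heq
      calc R x ^ η j = R x ^ (η j - 1) * R x := heq
        _ ≤ (δ ^ ((k - M) / M) * R 1) ^ (η j - 1) * (R k / p ^ (M - 1)) :=
          mul_le_mul h5 h6 hRxpos.le (Real.rpow_nonneg (by positivity) _)
    calc q j * seqMax (fun k' => R k' ^ η j) (max 1 (k - M + 1)) k
        ≤ q j * ((δ ^ ((k - M) / M) * R 1) ^ (η j - 1) * (R k / p ^ (M - 1))) :=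
          mul_le_mul_of_nonneg_left h1 (hq j hjJ)
      _ = q j * (δ ^ ((k - M) / M) * R 1) ^ (η j - 1) / p ^ (M - 1) * R k := by
          field_simp
  -- conclude
  have hD0 : Tendsto (fun k => (∑ j ∈ Finset.range J,
      q j * seqMax (fun k' => R k' ^ η j) (max 1 (k - M + 1)) k) / R k) atTop (nhds 0) := by
    apply squeeze_zero' ?_ ?_ hE
    · filter_upwards [eventually_ge_atTop 1] with k hk
      exact div_nonneg (Finset.sum_nonneg (hSnn k hk)) (hR k hk)
    · filter_upwards [eventually_ge_atTop 1] with k hk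
      rw [div_le_iff₀ (hpos k hk)]
      exact hDle k hk
  have hmain := hD0.const_add p
  rw [add_zero] at hmain
  refine Tendsto.congr' ?_ hmain
  filter_upwards [eventually_ge_atTop 1] with k hk
  rw [hrec k hk]
  have hne := (hpos k hk).ne'
  field_simp
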